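/- Let n = 2 and f = a·m_3 + b·m_{21} = a(x_1³+x_2³) + b(x_1²x_2 + x_1 x_2²) with f ≠ 0 and (a,b) not proportional to (1,3) (i.e., f not a scalar multiple of (x_1+x_2)³). Then f is a 2-exception if and only if b = 0 or b = 3a. -/

import Mathlib

open MvPolynomial

/-- `E^{(2)}(f) = Σ_j x_j ∂²f/∂x_j²`. -/
noncomputable def polarE2 (n : ℕ) (f : MvPolynomial (Fin n) ℝ) : MvPolynomial (Fin n) ℝ :=
  ∑ j : Fin n, X j * pderiv j (pderiv j f)

/-- The span of the first-order partial derivatives of `f` together with `E^{(2)}(f)`. -/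
noncomputable def exceptionSpan (n : ℕ) (f : MvPolynomial (Fin n) ℝ) :
    Submodule ℝ (MvPolynomial (Fin n) ℝ) :=
  Submodule.span ℝ (Set.range (fun j : Fin n => pderiv j f) ∪ {polarE2 n f})

/-- `f` is an `n`-exception if the span of `∂f/∂x_1, …, ∂f/∂x_n, E^{(2)}(f)`
has dimension exactly `n`. -/
def IsException (n : ℕ) (f : MvPolynomial (Fin n) ℝ) : Prop :=
  Module.finrank ℝ (exceptionSpan n f) = n

/-- The monomial symmetric polynomial `m_3 = Σ_j x_j³`. -/
noncomputable def msym3 (n : ℕ) : MvPolynomial (Fin n) ℝ := ∑ j : Fin n, X j ^ 3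

/-- The monomial symmetric polynomial `m_{21} = Σ_{i ≠ j} x_i² x_j`. -/
noncomputable def msym21 (n : ℕ) : MvPolynomial (Fin n) ℝ :=
  ∑ i : Fin n, ∑ j : Fin n, if i = j then 0 else X i ^ 2 * X j

/-- The monomial symmetric polynomial `m_{111} = Σ_{i < j < k} x_i x_j x_k`. -/
noncomputable def msym111 (n : ℕ) : MvPolynomial (Fin n) ℝ :=
  ∑ s ∈ Finset.univ.powersetCard 3, ∏ a ∈ s, X a

namespace Aux2Exc

noncomputable def fab (a b : ℝ) : MvPolynomial (Fin 2) ℝ := a • msym3 2 + b • msym21 2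

lemma pderiv_ofNat (i : Fin 2) (m : ℕ) [m.AtLeastTwo] :
    pderiv i (no_index (OfNat.ofNat m) : MvPolynomial (Fin 2) ℝ) = 0 := by
  rw [← map_ofNat (C : ℝ →+* MvPolynomial (Fin 2) ℝ) m, pderiv_C]

lemma pderiv_natCast (i : Fin 2) (m : ℕ) :
    pderiv i ((m : MvPolynomial (Fin 2) ℝ)) = 0 := by
  rw [← map_natCast (C : ℝ →+* MvPolynomial (Fin 2) ℝ) m, pderiv_C]

lemma deriv0 (a b : ℝ) : pderiv 0 (fab a b) =
    C (3*a) * X 0 ^ 2 + C (2*b) * (X 0 * X 1) + C b * X 1 ^ 2 := by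
  simp [fab, msym3, msym21, Fin.sum_univ_two, pderiv_mul, pderiv_X_self, pderiv_X_of_ne,
    pderiv_pow, smul_eq_C_mul, map_mul, map_ofNat, pderiv_ofNat, pderiv_natCast]
  ring

lemma deriv1 (a b : ℝ) : pderiv 1 (fab a b) =
    C b * X 0 ^ 2 + C (2*b) * (X 0 * X 1) + C (3*a) * X 1 ^ 2 := by
  simp [fab, msym3, msym21, Fin.sum_univ_two, pderiv_mul, pderiv_X_self, pderiv_X_of_ne,
    pderiv_pow, smul_eq_C_mul, map_mul, map_ofNat, pderiv_ofNat, pderiv_natCast]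
  ring

lemma polarE2_eq (a b : ℝ) : polarE2 2 (fab a b) =
    C (6*a) * X 0 ^ 2 + C (4*b) * (X 0 * X 1) + C (6*a) * X 1 ^ 2 := by
  simp [polarE2, fab, msym3, msym21, Fin.sum_univ_two, pderiv_mul, pderiv_X_self,
    pderiv_X_of_ne, pderiv_pow, smul_eq_C_mul, map_mul, map_ofNat, pderiv_ofNat, pderiv_natCast]
  ring

lemma span_eq (a b : ℝ) : exceptionSpan 2 (fab a b) =
    Submodule.span ℝ
      (Set.range ![pderiv 0 (fab a b), pderiv 1 (fab a b), polarE2 2 (fab a b)]) := by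
  rw [exceptionSpan]
  congr 1
  ext p
  simp only [Set.mem_union, Set.mem_range, Set.mem_singleton_iff]
  constructor
  · rintro (⟨j, rfl⟩ | rfl)
    · fin_cases j
      · exact ⟨0, rfl⟩
      · exact ⟨1, rfl⟩
    · exact ⟨2, rfl⟩
  · rintro ⟨i, rfl⟩
    fin_cases i
    · exact Or.inl ⟨0, rfl⟩
    · exact Or.inl ⟨1, rfl⟩
    · exact Or.inr rfl

lemma rank_three (a b : ℝ) (hb : b ≠ 0) (hab : b ≠ 3 * a) :
    Module.finrank ℝ (exceptionSpan 2 (fab a b)) = 3 := by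
  rw [span_eq]
  have hli : LinearIndependent ℝ
      ![pderiv 0 (fab a b), pderiv 1 (fab a b), polarE2 2 (fab a b)] := by
    rw [Fintype.linearIndependent_iff]
    intro g hg
    rw [Fin.sum_univ_three] at hg
    simp only [Matrix.cons_val_zero, Matrix.cons_val_one, Matrix.head_cons,
      Matrix.cons_val_two, Matrix.tail_cons, deriv0, deriv1, polarE2_eq] at hg
    have hA := congrArg (eval ![(1:ℝ), 0]) hg
    have hB := congrArg (eval ![(0:ℝ), 1]) hg
    have hC := congrArg (eval ![(1:ℝ), 1]) hg
    simp only [smul_eq_C_mul, map_add, map_mul, eval_C, eval_X, map_zero, eval_pow,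
      Matrix.cons_val_zero, Matrix.cons_val_one, Matrix.head_cons] at hA hB hC
    have hab' : 3 * a - b ≠ 0 := fun h => hab (by linarith [sub_eq_zero.mp h])
    have e1 : (3 * a - b) * (g 0 - g 1) = 0 := by linear_combination hA - hB
    have e2 : g 0 = g 1 := by
      rcases mul_eq_zero.mp e1 with h | h
      · exact absurd h hab'
      · linarith [sub_eq_zero.mp h]
    have e3 : (2 * b) * (g 0 + g 1 + 2 * g 2) = 0 := by linear_combination hC - hA - hB
    have e4 : g 0 + g 1 + 2 * g 2 = 0 := by
      rcases mul_eq_zero.mp e3 with h | h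
      · exact absurd (by linarith : b = 0) hb
      · exact h
    have e5 : (b - 3 * a) * g 1 = 0 := by linear_combination hA - 3 * a * e4
    have hg1 : g 1 = 0 := by
      rcases mul_eq_zero.mp e5 with h | h
      · exact absurd (by linarith : b = 3 * a) hab
      · exact h
    have hg0 : g 0 = 0 := e2.trans hg1
    have hg2 : g 2 = 0 := by linarith
    intro i
    fin_cases i
    · exact hg0
    · exact hg1
    · exact hg2
  rw [finrank_span_eq_card hli, Fintype.card_fin]

lemma rank_two (a : ℝ) (ha : a ≠ 0) :
    Module.finrank ℝ (exceptionSpan 2 (fab a 0)) = 2 := by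
  have h3a : (3:ℝ) * a ≠ 0 := fun h => ha (by linarith)
  have hd0 : pderiv 0 (fab a 0) = (3*a) • ((X 0 : MvPolynomial (Fin 2) ℝ) ^ 2) := by
    rw [deriv0]; simp [smul_eq_C_mul]
  have hd1 : pderiv 1 (fab a 0) = (3*a) • ((X 1 : MvPolynomial (Fin 2) ℝ) ^ 2) := by
    rw [deriv1]; simp [smul_eq_C_mul]
  have hE : polarE2 2 (fab a 0) =
      (6*a) • ((X 0 : MvPolynomial (Fin 2) ℝ) ^ 2)
        + (6*a) • ((X 1 : MvPolynomial (Fin 2) ℝ) ^ 2) := by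
    rw [polarE2_eq]; simp [smul_eq_C_mul]
  have key : exceptionSpan 2 (fab a 0) =
      Submodule.span ℝ (Set.range ![(X 0 : MvPolynomial (Fin 2) ℝ) ^ 2, X 1 ^ 2]) := by
    rw [span_eq, hd0, hd1, hE]
    apply le_antisymm
    · apply Submodule.span_le.mpr
      rintro p ⟨i, rfl⟩
      fin_cases i <;> simp only [Fin.zero_eta, Fin.mk_one, Matrix.cons_val_zero, Matrix.cons_val_one, Matrix.head_cons,
        Matrix.cons_val_two, Matrix.tail_cons, SetLike.mem_coe]
      · exact Submodule.smul_mem _ _ (Submodule.subset_span ⟨0, rfl⟩)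
      · exact Submodule.smul_mem _ _ (Submodule.subset_span ⟨1, rfl⟩)
      · exact Submodule.add_mem _
          (Submodule.smul_mem _ _ (Submodule.subset_span ⟨0, rfl⟩))
          (Submodule.smul_mem _ _ (Submodule.subset_span ⟨1, rfl⟩))
    · apply Submodule.span_le.mpr
      rintro p ⟨i, rfl⟩
      fin_cases i <;> simp only [Fin.zero_eta, Fin.mk_one, Matrix.cons_val_zero, Matrix.cons_val_one, Matrix.head_cons,
        SetLike.mem_coe]
      · have hmem := Submodule.smul_mem (Submodule.span ℝ
            (Set.range ![(3*a) • ((X 0 : MvPolynomial (Fin 2) ℝ) ^ 2), (3*a) • X 1 ^ 2,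
              (6*a) • ((X 0 : MvPolynomial (Fin 2) ℝ) ^ 2) + (6*a) • X 1 ^ 2])) (3*a)⁻¹
            (Submodule.subset_span ⟨0, rfl⟩)
        simp only [Matrix.cons_val_zero] at hmem
        rw [smul_smul, inv_mul_cancel₀ h3a, one_smul] at hmem
        exact hmem
      · have hmem := Submodule.smul_mem (Submodule.span ℝ
            (Set.range ![(3*a) • ((X 0 : MvPolynomial (Fin 2) ℝ) ^ 2), (3*a) • X 1 ^ 2,
              (6*a) • ((X 0 : MvPolynomial (Fin 2) ℝ) ^ 2) + (6*a) • X 1 ^ 2])) (3*a)⁻¹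
            (Submodule.subset_span ⟨1, rfl⟩)
        simp only [Matrix.cons_val_one, Matrix.head_cons, Matrix.cons_val_zero] at hmem
        rw [smul_smul, inv_mul_cancel₀ h3a, one_smul] at hmem
        exact hmem
  rw [key]
  have hli : LinearIndependent ℝ ![(X 0 : MvPolynomial (Fin 2) ℝ) ^ 2, X 1 ^ 2] := by
    rw [Fintype.linearIndependent_iff]
    intro g hg
    rw [Fin.sum_univ_two] at hg
    simp only [Matrix.cons_val_zero, Matrix.cons_val_one, Matrix.head_cons] at hg
    have hA := congrArg (eval ![(1:ℝ), 0]) hg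
    have hB := congrArg (eval ![(0:ℝ), 1]) hg
    simp only [map_add, smul_eval, map_zero, eval_pow, eval_X,
      Matrix.cons_val_zero, Matrix.cons_val_one, Matrix.head_cons] at hA hB
    intro i
    fin_cases i
    · simpa using hA
    · simpa using hB
  rw [finrank_span_eq_card hli, Fintype.card_fin]

end Aux2Exc

/-- For `n = 2` and `f = a·m_3 + b·m_{21}` nonzero and not a scalar multiple of
`(x_1+x_2)³`, `f` is a `2`-exception iff `b = 0` or `b = 3a`. -/
theorem isException_iff_degree_three_two_vars (a b : ℝ)
    (hf : a • msym3 2 + b • msym21 2 ≠ 0)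
    (hprop : ¬ ∃ t : ℝ, a = t ∧ b = 3 * t) :
    IsException 2 (a • msym3 2 + b • msym21 2) ↔ b = 0 ∨ b = 3 * a := by
  have hab : b ≠ 3 * a := fun h => hprop ⟨a, rfl, h⟩
  constructor
  · intro h
    by_contra hcon
    push_neg at hcon
    have h3 := Aux2Exc.rank_three a b hcon.1 hab
    rw [IsException] at h
    rw [show a • msym3 2 + b • msym21 2 = Aux2Exc.fab a b from rfl] at h
    omega
  · rintro (rfl | h)
    · have ha : a ≠ 0 := by
        rintro rfl
        apply hf
        simp
      rw [IsException]
      exact Aux2Exc.rank_two a ha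
    · exact absurd h hab
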